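/- Let i* be a bidder with maximum value v_{i*}(s), and let y ∈ [0,1] be the share eaten by i* in the eating process with weights w where w(i*) = v_{i*}(s) and w(j) ≤ v_{i*}(s) for all j. Then every bidder who eats a positive amount in this process starts eating no later than time y − ln(v_{i*}(s)), and hence has weight at least v_{i*}(s) · e^{−y}. Consequently the total weighted share ∑_j w(j) · x_j, where x_j is j's share, is at least v_{i*}(s) · (y + (1−y)e^{−y}). -/

import Mathlib

open Finset

/-- In the eating process with positive weights `w`, where `i⋆` has maximum weight
`w i⋆ = v_{i⋆}(s)`, `t` is the stopping time (total consumption equals `1`), and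
`y = (t + ln (w i⋆))⁺` is the share eaten by `i⋆`: every bidder eating a positive
amount has weight at least `w i⋆ · e^{−y}`, and the total weighted share is at
least `w i⋆ · (y + (1 − y)·e^{−y})`. -/
theorem stmt_8 {n : ℕ} (w : Fin n → ℝ) (hw : ∀ j, 0 < w j)
    (istar : Fin n) (hmax : ∀ j, w j ≤ w istar)
    (t : ℝ) (ht : ∑ j : Fin n, max (t + Real.log (w j)) 0 = 1)
    (y : ℝ) (hy : y = max (t + Real.log (w istar)) 0) :
    (∀ j : Fin n, 0 < max (t + Real.log (w j)) 0 →
        -Real.log (w j) ≤ y - Real.log (w istar) ∧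
        w istar * Real.exp (-y) ≤ w j) ∧
    w istar * (y + (1 - y) * Real.exp (-y)) ≤
      ∑ j : Fin n, w j * max (t + Real.log (w j)) 0 := by
  set x : Fin n → ℝ := fun j => max (t + Real.log (w j)) 0 with hx
  have hxnn : ∀ j, 0 ≤ x j := fun j => le_max_right _ _
  have hxle : ∀ j, x j ≤ y := by
    intro j
    rw [hy]
    have : Real.log (w j) ≤ Real.log (w istar) :=
      Real.log_le_log (hw j) (hmax j)
    exact max_le_max (by linarith) le_rfl
  have hy0 : 0 ≤ y := hy ▸ le_max_right _ _
  have hypos : 0 < y := by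
    by_contra h
    push_neg at h
    have : ∑ j : Fin n, x j ≤ 0 :=
      Finset.sum_nonpos fun j _ => le_trans (hxle j) h
    rw [ht] at this; linarith
  have hty : 0 < t + Real.log (w istar) := by
    rcases lt_max_iff.mp (hy ▸ hypos) with h | h
    · exact h
    · exact absurd h (lt_irrefl 0)
  have hyeq : y = t + Real.log (w istar) := by rw [hy, max_eq_left hty.le]
  have part1 : ∀ j : Fin n, 0 < x j →
      -Real.log (w j) ≤ y - Real.log (w istar) ∧
      w istar * Real.exp (-y) ≤ w j := by
    intro j hj
    have hj' : 0 < t + Real.log (w j) := by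
      rcases lt_max_iff.mp hj with h | h
      · exact h
      · exact absurd h (lt_irrefl 0)
    constructor
    · linarith [hyeq]
    · have h1 : Real.log (w istar) - y ≤ Real.log (w j) := by linarith [hyeq]
      calc w istar * Real.exp (-y)
          = Real.exp (Real.log (w istar) - y) := by
            rw [Real.exp_sub, Real.exp_log (hw istar), Real.exp_neg]; ring
        _ ≤ Real.exp (Real.log (w j)) := Real.exp_le_exp.mpr h1
        _ = w j := Real.exp_log (hw j)
  refine ⟨part1, ?_⟩
  have hxistar : x istar = y := by rw [hx]; simp [hy]
  set c : ℝ := w istar * Real.exp (-y) with hc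
  have hterm : ∀ j : Fin n, c * x j ≤ w j * x j := by
    intro j
    rcases eq_or_lt_of_le (hxnn j) with h | h
    · rw [← h]; simp
    · exact mul_le_mul_of_nonneg_right (part1 j h).2 (hxnn j)
  have hsplit := Finset.add_sum_erase Finset.univ (fun j => w j * x j)
    (Finset.mem_univ istar)
  have hsplit2 := Finset.add_sum_erase Finset.univ x (Finset.mem_univ istar)
  have hrest : ∑ j ∈ Finset.univ.erase istar, x j = 1 - y := by
    have : x istar + ∑ j ∈ Finset.univ.erase istar, x j = 1 := by
      rw [hsplit2]; exact ht
    rw [hxistar] at this; linarith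
  have hbound : c * (1 - y) ≤ ∑ j ∈ Finset.univ.erase istar, w j * x j := by
    calc c * (1 - y) = ∑ j ∈ Finset.univ.erase istar, c * x j := by
          rw [← Finset.mul_sum, hrest]
      _ ≤ _ := Finset.sum_le_sum fun j _ => hterm j
  have : ∑ j : Fin n, w j * x j
      = w istar * y + ∑ j ∈ Finset.univ.erase istar, w j * x j := by
    rw [← hsplit]; rw [hxistar]
  rw [this]
  have : w istar * (y + (1 - y) * Real.exp (-y)) = w istar * y + c * (1 - y) := by
    rw [hc]; ring
  linarith
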